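/- In a simply-laced Weyl group, an element w is small-height-avoiding if and only if it is short-braid-avoiding, i.e., no reduced expression for w contains a factor s_i s_j s_i with s_i ≠ s_j. -/

import Mathlib

open Finset

noncomputable section

namespace QBG

variable {ι V V' : Type*} [Fintype ι] [AddCommGroup V] [Module ℝ V]
  [AddCommGroup V'] [Module ℝ V']

variable (P : RootPairing ι ℝ V V') [P.IsRootSystem] (f : V →ₗ[ℝ] ℝ)

/-- `k` indexes a positive root (w.r.t. the regular linear functional `f`). -/
def Pos (k : ι) : Prop := 0 < f (P.root k)

/-- `k` indexes a simple root: positive and not a sum of two positive roots. -/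
def IsSimple (k : ι) : Prop := Pos P f k ∧
  ¬ ∃ i j : ι, Pos P f i ∧ Pos P f j ∧ P.root k = P.root i + P.root j

/-- The reflection `s_α` associated to the root indexed by `k`. -/
def refl (k : ι) : V ≃ₗ[ℝ] V := P.reflection k

/-- `l` is a word in simple reflections with product `w`. -/
def Wrd (w : V ≃ₗ[ℝ] V) (l : List ι) : Prop :=
  (∀ i ∈ l, IsSimple P f i) ∧ (l.map (refl P)).prod = w

/-- `w` lies in the Weyl group (generated by simple reflections). -/
def InW (w : V ≃ₗ[ℝ] V) : Prop := ∃ l, Wrd P f w l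

/-- Coxeter length of `w` with respect to the simple reflections. -/
def len (w : V ≃ₗ[ℝ] V) : ℕ := sInf {n | ∃ l, Wrd P f w l ∧ l.length = n}

/-- The pairing `⟨2ρ, α_k^∨⟩` where `ρ` is the half-sum of positive roots. -/
def tworho (k : ι) : ℝ := ∑ i, if 0 < f (P.root i) then P.pairing i k else 0

/-- An upward edge of the quantum Bruhat graph, from `w`, labeled `k`. -/
def UpStep (w : V ≃ₗ[ℝ] V) (k : ι) : Prop :=
  Pos P f k ∧ len P f (w * refl P k) = len P f w + 1

/-- A downward edge of the quantum Bruhat graph, from `w`, labeled `k`. -/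
def DownStep (w : V ≃ₗ[ℝ] V) (k : ι) : Prop :=
  Pos P f k ∧ (len P f (w * refl P k) : ℝ) = (len P f w : ℝ) - tworho P f k + 1

/-- An edge of the quantum Bruhat graph, from `w`, labeled `k`. -/
def Step (w : V ≃ₗ[ℝ] V) (k : ι) : Prop := UpStep P f w k ∨ DownStep P f w k

/-- `ks` is the list of labels of a directed path in the quantum Bruhat graph
starting at `w`. -/
def ValidPath : (V ≃ₗ[ℝ] V) → List ι → Prop
  | _, [] => True
  | w, k :: ks => Step P f w k ∧ ValidPath (w * refl P k) ks

/-- `ks` is the list of labels of an all-downward path starting at `w`. -/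
def DownPath : (V ≃ₗ[ℝ] V) → List ι → Prop
  | _, [] => True
  | w, k :: ks => DownStep P f w k ∧ DownPath (w * refl P k) ks

/-- `ks` is the list of labels of an all-upward path starting at `w`. -/
def UpPath : (V ≃ₗ[ℝ] V) → List ι → Prop
  | _, [] => True
  | w, k :: ks => UpStep P f w k ∧ UpPath (w * refl P k) ks

/-- The endpoint of the path starting at `w` with edge labels `ks`. -/
def pathEnd (w : V ≃ₗ[ℝ] V) (ks : List ι) : V ≃ₗ[ℝ] V := w * (ks.map (refl P)).prod

/-- The distance `d_Γ(u,v)` in the quantum Bruhat graph. -/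
def dist (u v : V ≃ₗ[ℝ] V) : ℕ :=
  sInf {n | ∃ ks, ValidPath P f u ks ∧ pathEnd P u ks = v ∧ ks.length = n}

/-- The all-downward distance `d_↓(w)` from `w` to the identity. -/
def ddown (w : V ≃ₗ[ℝ] V) : ℕ :=
  sInf {n | ∃ ks, DownPath P f w ks ∧ pathEnd P w ks = 1 ∧ ks.length = n}

open Classical in
/-- The pairing of `2ρ` with the weight of the path `(w, ks)`, i.e. the sum of
`⟨2ρ, α^∨⟩` over the downward edges of the path. -/
def downWeight : (V ≃ₗ[ℝ] V) → List ι → ℝ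
  | _, [] => 0
  | w, k :: ks =>
      (if UpStep P f w k then 0 else tworho P f k) + downWeight (w * refl P k) ks

/-- `w` contains `v`: `w = u * v * u'` length-additively. -/
def Contains (w v : V ≃ₗ[ℝ] V) : Prop :=
  ∃ u u', InW P f u ∧ InW P f u' ∧ w = u * v * u' ∧
    len P f w = len P f u + len P f v + len P f u'

/-- `w` is small-height-avoiding: it contains no non-simple reflection `s_β`
with `ℓ(s_β) = ⟨2ρ, β^∨⟩ - 1`. -/
def SmallHeightAvoiding (w : V ≃ₗ[ℝ] V) : Prop :=
  ¬ ∃ k : ι, Pos P f k ∧ ¬ IsSimple P f k ∧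
      (len P f (refl P k) : ℝ) = tworho P f k - 1 ∧ Contains P f w (refl P k)

/-- The root system `P` is reduced. -/
def Reduced : Prop := ∀ i j : ι, P.root i ≠ (2 : ℝ) • P.root j

/-- The linear functional `f` is regular: it vanishes on no root. -/
def Regular : Prop := ∀ i : ι, f (P.root i) ≠ 0



section Dev

set_option linter.unusedSectionVars false

variable {P f}

local notation "B" => RootPairing.RootForm P

lemma pairZ (hP : P.IsCrystallographic) (i j : ι) : ∃ n : ℤ, (n : ℝ) = P.pairing i j :=
  by
    obtain ⟨s, hs⟩ := RootPairing.IsValuedIn.exists_value (P := P) (S := ℤ) i j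
    exact ⟨s, by simpa using hs⟩

lemma two_mul_B (i j : ι) :
    2 * B (P.root i) (P.root j) = P.pairing i j * B (P.root j) (P.root j) := by
  exact P.toInvariantForm.two_mul_apply_root_root i j

lemma B_symm (x y : V) : B x y = B y x := by
  simpa using P.rootForm_symmetric.eq x y

lemma B_pos (i : ι) : 0 < B (P.root i) (P.root i) :=
  P.rootForm_pos_of_ne_zero (Submodule.subset_span (Set.mem_range_self i)) (P.ne_zero i)

lemma B_nonneg (x : V) : 0 ≤ B x x := P.zero_le_rootForm x

lemma root_mem_rootSpan (i : ι) : P.root i ∈ P.rootSpan ℝ :=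
  Submodule.subset_span (Set.mem_range_self i)

lemma B_cs (i j : ι) :
    B (P.root i) (P.root j) * B (P.root i) (P.root j) ≤
      B (P.root i) (P.root i) * B (P.root j) (P.root j) := by
  set x := P.root i
  set y := P.root j
  have h0 : 0 ≤ B (B y y • x - B x y • y) (B y y • x - B x y • y) := B_nonneg _
  have hy : 0 < B y y := B_pos j
  have hsymm : B x y = B y x := B_symm x y
  simp only [map_sub, map_smul, LinearMap.sub_apply, LinearMap.smul_apply, smul_eq_mul] at h0
  rw [← hsymm] at h0
  nlinarith [h0, hy]

lemma norm_eq_of_pairing_ne_zero (hSL : ∀ i j : ι, P.pairing i j = P.pairing j i)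
    {i j : ι} (h : P.pairing i j ≠ 0) :
    B (P.root i) (P.root i) = B (P.root j) (P.root j) := by
  have h1 := two_mul_B (P := P) i j
  have h2 := two_mul_B (P := P) j i
  rw [hSL j i] at h2
  rw [B_symm (P := P) (P.root j) (P.root i)] at h2
  have : P.pairing i j * B (P.root j) (P.root j) = P.pairing i j * B (P.root i) (P.root i) := by
    rw [← h1, ← h2]
  exact (mul_left_cancel₀ h this).symm

lemma pairing_sq_le_four (hSL : ∀ i j : ι, P.pairing i j = P.pairing j i) (i j : ι) :
    P.pairing i j ^ 2 ≤ 4 := by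
  have h1 := two_mul_B (P := P) i j
  have h2 := two_mul_B (P := P) j i
  rw [hSL j i, B_symm (P := P) (P.root j) (P.root i)] at h2
  have hcs := B_cs (P := P) i j
  have hi := B_pos (P := P) i
  have hj := B_pos (P := P) j
  have h12 : (2 * B (P.root i) (P.root j)) * (2 * B (P.root i) (P.root j)) =
      (P.pairing i j * B (P.root j) (P.root j)) * (P.pairing i j * B (P.root i) (P.root i)) := by
    rw [← h1, ← h2]
  have key : P.pairing i j ^ 2 * (B (P.root i) (P.root i) * B (P.root j) (P.root j)) ≤
      4 * (B (P.root i) (P.root i) * B (P.root j) (P.root j)) := by nlinarith [h12, hcs]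
  exact (mul_le_mul_iff_left₀ (mul_pos hi hj)).mp key

lemma root_eq_of_pairing_eq_two (hSL : ∀ i j : ι, P.pairing i j = P.pairing j i)
    {i j : ι} (h : P.pairing i j = 2) : P.root i = P.root j := by
  have hnorm : B (P.root i) (P.root i) = B (P.root j) (P.root j) :=
    norm_eq_of_pairing_ne_zero hSL (by rw [h]; norm_num)
  have h1 := two_mul_B (P := P) i j
  have hz : B (P.root i - P.root j) (P.root i - P.root j) = 0 := by
    have hs : B (P.root i) (P.root j) = B (P.root j) (P.root i) := B_symm _ _
    simp only [map_sub, LinearMap.sub_apply]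
    rw [h] at h1
    linarith [h1, hnorm, hs]
  have hmem : P.root i - P.root j ∈ P.rootSpan ℝ :=
    sub_mem (root_mem_rootSpan i) (root_mem_rootSpan j)
  have := P.eq_zero_of_mem_rootSpan_of_rootForm_self_eq_zero hmem hz
  exact sub_eq_zero.mp this


lemma mulApply (u v : V ≃ₗ[ℝ] V) (x : V) : (u * v) x = u (v x) := rfl

lemma refl_apply (k : ι) (x : V) : refl P k x = x - (P.coroot' k x) • P.root k := rfl

lemma f_refl (k : ι) (x : V) : f (refl P k x) = f x - (P.coroot' k x) * f (P.root k) := by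
  rw [refl_apply, map_sub, map_smul]; rfl

lemma refl_neg_index (k : ι) : refl P (P.reflectionPerm k k) = refl P k := by
  ext x
  have h1 : P.coroot' (P.reflectionPerm k k) x = - P.coroot' k x := by
    rw [← RootPairing.coroot'_reflection]
    simp only [RootPairing.reflection_apply, map_sub, map_smul, smul_eq_mul,
      RootPairing.root_coroot'_eq_pairing, RootPairing.pairing_same]
    ring
  show P.reflection _ x = P.reflection k x
  rw [RootPairing.reflection_apply, RootPairing.reflection_apply, h1,
    RootPairing.root_reflectionPerm, RootPairing.reflection_apply_self]
  simp

lemma refl_conj (a m : ι) :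
    refl P (P.reflectionPerm a m) = refl P a * refl P m * refl P a := by
  ext x
  show P.reflection _ x = (P.reflection a) ((P.reflection m) ((P.reflection a) x))
  rw [RootPairing.reflection_apply (i := P.reflectionPerm a m),
    ← RootPairing.coroot'_reflection, RootPairing.root_reflectionPerm,
    RootPairing.reflection_apply (i := m) (x := P.reflection a x), map_sub, map_smul,
    RootPairing.reflection_same]

lemma root_foldr (l : List ι) (i : ι) :
    P.root (l.foldr (fun a j => P.reflectionPerm a j) i) = (l.map (refl P)).prod (P.root i) := by
  induction l with
  | nil => simp
  | cons a t ih =>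
      simp only [List.foldr_cons, List.map_cons, List.prod_cons, mulApply,
        RootPairing.root_reflectionPerm, ih]
      rfl

lemma refl_foldr (l : List ι) (i : ι) :
    refl P (l.foldr (fun a j => P.reflectionPerm a j) i)
      = (l.map (refl P)).prod * refl P i * ((l.map (refl P)).prod)⁻¹ := by
  induction l with
  | nil => simp
  | cons a t ih =>
      simp only [List.foldr_cons, List.map_cons, List.prod_cons]
      rw [refl_conj, ih]
      group
      simp [refl, mul_assoc]

lemma pairing_mem (hP : P.IsCrystallographic) (hSL : ∀ i j : ι, P.pairing i j = P.pairing j i)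
    (i j : ι) : P.pairing i j = -2 ∨ P.pairing i j = -1 ∨ P.pairing i j = 0 ∨
      P.pairing i j = 1 ∨ P.pairing i j = 2 := by
  obtain ⟨n, hn⟩ := pairZ hP i j
  have h4 := pairing_sq_le_four hSL i j
  rw [← hn] at h4 ⊢
  have hn4 : n ^ 2 ≤ 4 := by exact_mod_cast h4
  have h1 : -2 ≤ n := by nlinarith
  have h2 : n ≤ 2 := by nlinarith
  interval_cases n <;> norm_num


lemma f_root_perm (i m : ι) :
    f (P.root (P.reflectionPerm i m)) = f (P.root m) - P.pairing m i * f (P.root i) := by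
  rw [RootPairing.root_reflectionPerm, RootPairing.reflection_apply_root, map_sub, map_smul,
    smul_eq_mul]

lemma root_perm_eq (i m : ι) :
    P.root (P.reflectionPerm i m) = P.root m - P.pairing m i • P.root i := by
  rw [RootPairing.root_reflectionPerm, RootPairing.reflection_apply_root]

lemma pairing_perm_left (i m : ι) :
    P.pairing (P.reflectionPerm i m) i = - P.pairing m i := by
  rw [← RootPairing.pairing_reflectionPerm, RootPairing.pairing_reflectionPerm_self_right]

lemma simple_refl_pos (hP : P.IsCrystallographic) (hreg : Regular P f)
    (hSL : ∀ i j : ι, P.pairing i j = P.pairing j i)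
    {i m : ι} (hi : IsSimple P f i) (hm : Pos P f m) (hne : P.root m ≠ P.root i) :
    Pos P f (P.reflectionPerm i m) := by
  have hfi : 0 < f (P.root i) := hi.1
  rcases pairing_mem hP hSL m i with h | h | h | h | h
  · show 0 < _; rw [f_root_perm, h]; nlinarith [show (0:ℝ) < f (P.root m) from hm, hfi]
  · show 0 < _; rw [f_root_perm, h]; nlinarith [show (0:ℝ) < f (P.root m) from hm, hfi]
  · show 0 < _; rw [f_root_perm, h]; nlinarith [show (0:ℝ) < f (P.root m) from hm, hfi]
  · by_contra h0
    have hneg : f (P.root (P.reflectionPerm i m)) < 0 :=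
      lt_of_le_of_ne (not_lt.mp h0) (hreg _)
    refine hi.2 ⟨m, P.reflectionPerm (P.reflectionPerm i m) (P.reflectionPerm i m), hm, ?_, ?_⟩
    · show 0 < _
      rw [RootPairing.root_reflectionPerm, RootPairing.reflection_apply_self, map_neg]
      linarith
    · rw [RootPairing.root_reflectionPerm, RootPairing.reflection_apply_self, root_perm_eq, h,
        one_smul]
      abel
  · exact absurd (root_eq_of_pairing_eq_two hSL h) hne

lemma simple_refl_neg (hP : P.IsCrystallographic) (hreg : Regular P f)
    (hSL : ∀ i j : ι, P.pairing i j = P.pairing j i)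
    {i m : ι} (hi : IsSimple P f i) (hm : f (P.root m) < 0) (hne : P.root m ≠ - P.root i) :
    f (P.root (P.reflectionPerm i m)) < 0 := by
  have hm' : Pos P f (P.reflectionPerm m m) := by
    show 0 < _
    rw [RootPairing.root_reflectionPerm, RootPairing.reflection_apply_self, map_neg]
    linarith
  have hne' : P.root (P.reflectionPerm m m) ≠ P.root i := by
    rw [RootPairing.root_reflectionPerm, RootPairing.reflection_apply_self]
    intro hc
    exact hne (by rw [← hc]; simp)
  have hpos := simple_refl_pos hP hreg hSL hi hm' hne'
  have hroots : P.root (P.reflectionPerm i (P.reflectionPerm m m))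
      = - P.root (P.reflectionPerm i m) := by
    rw [RootPairing.root_reflectionPerm, RootPairing.root_reflectionPerm,
      RootPairing.root_reflectionPerm, RootPairing.reflection_apply_self, map_neg]
  have := hpos
  show _ < 0
  unfold Pos at this
  rw [hroots, map_neg] at this
  linarith

lemma exists_simple_sum (hreg : Regular P f) :
    ∀ n : ℕ, ∀ k : ι,
      (Finset.univ.filter (fun a => 0 < f (P.root a) ∧ f (P.root a) < f (P.root k))).card < n →
      Pos P f k →
      ∃ L : List ι, (∀ a ∈ L, IsSimple P f a) ∧ (L.map (fun a => P.root a)).sum = P.root k := by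
  intro n
  induction n with
  | zero => intro k hk; omega
  | succ n ih =>
      intro k hcard hk
      by_cases hks : IsSimple P f k
      · exact ⟨[k], by simpa using hks, by simp⟩
      · have hk' : ∃ a b : ι, Pos P f a ∧ Pos P f b ∧ P.root k = P.root a + P.root b := by
          by_contra hc
          exact hks ⟨hk, hc⟩
        obtain ⟨a, b, ha, hb, hab⟩ := hk'
        have hfk : f (P.root k) = f (P.root a) + f (P.root b) := by rw [hab, map_add]
        have hcard' : ∀ c : ι, Pos P f c → f (P.root c) < f (P.root k) →
            (Finset.univ.filter (fun x => 0 < f (P.root x) ∧ f (P.root x) < f (P.root c))).card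
            < (Finset.univ.filter
                (fun x => 0 < f (P.root x) ∧ f (P.root x) < f (P.root k))).card := by
          intro c hc hck
          apply Finset.card_lt_card
          constructor
          · intro x hx
            simp only [Finset.mem_filter, Finset.mem_univ, true_and] at hx ⊢
            exact ⟨hx.1, lt_trans hx.2 hck⟩
          · intro hsub
            have hcmem : c ∈ Finset.univ.filter
                (fun x => 0 < f (P.root x) ∧ f (P.root x) < f (P.root k)) := by
              simp only [Finset.mem_filter, Finset.mem_univ, true_and]
              exact ⟨hc, hck⟩
            have := hsub hcmem
            simp only [Finset.mem_filter, Finset.mem_univ, true_and] at this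
            exact lt_irrefl _ this.2
        have hak : f (P.root a) < f (P.root k) := by have := hb; unfold Pos at this; linarith
        have hbk : f (P.root b) < f (P.root k) := by have := ha; unfold Pos at this; linarith
        obtain ⟨La, hLa, hsa⟩ := ih a (by have := hcard' a ha hak; omega) ha
        obtain ⟨Lb, hLb, hsb⟩ := ih b (by have := hcard' b hb hbk; omega) hb
        refine ⟨La ++ Lb, ?_, ?_⟩
        · intro x hx
          rcases List.mem_append.mp hx with h | h
          · exact hLa x h
          · exact hLb x h
        · rw [List.map_append, List.sum_append, hsa, hsb, hab]

lemma list_sum_nonpos : ∀ (l : List ℝ), (∀ x ∈ l, x ≤ 0) → l.sum ≤ 0 := by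
  intro l
  induction l with
  | nil => intro _; simp
  | cons a t ih =>
      intro h
      rw [List.sum_cons]
      have ha := h a (List.mem_cons_self)
      have ht := ih (fun x hx => h x (List.mem_cons_of_mem a hx))
      linarith

lemma exists_simple_pairing_pos (hreg : Regular P f) (k : ι) (hk : Pos P f k) :
    ∃ i : ι, IsSimple P f i ∧ 0 < P.pairing i k := by
  obtain ⟨L, hL, hsum⟩ := exists_simple_sum hreg _ k (Nat.lt_succ_self _) hk
  have h2 : (L.map (fun a => P.pairing a k)).sum = 2 := by
    have h := congrArg (P.coroot' k) hsum
    rw [map_list_sum, List.map_map, RootPairing.root_coroot'_eq_pairing,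
      RootPairing.pairing_same] at h
    rw [← h]
    congr 1
  by_contra hc
  push_neg at hc
  have : (L.map (fun a => P.pairing a k)).sum ≤ 0 := by
    apply list_sum_nonpos
    intro x hx
    obtain ⟨a, haL, rfl⟩ := List.mem_map.mp hx
    exact hc a (hL a haL)
  linarith


lemma root_ne_neg_self (i : ι) : P.root i ≠ - P.root i := by
  intro h
  have h0 : (2 : ℝ) • P.root i = 0 := by
    rw [two_smul]
    nth_rw 2 [h]
    abel
  have : P.root i = 0 := by
    rcases smul_eq_zero.mp h0 with h' | h'
    · norm_num at h'
    · exact h'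
  exact P.ne_zero i this

lemma tworho_simple (hP : P.IsCrystallographic) (hreg : Regular P f)
    (hSL : ∀ i j : ι, P.pairing i j = P.pairing j i) {i : ι} (hi : IsSimple P f i) :
    tworho P f i = 2 := by
  classical
  set g : ι → ℝ := fun m => if 0 < f (P.root m) then P.pairing m i else 0 with hg
  have hT : tworho P f i = ∑ m, g m := rfl
  have hperm : ∑ m, g m = ∑ m, g (P.reflectionPerm i m) :=
    (Fintype.sum_equiv (P.reflectionPerm i) _ _ (fun m => rfl)).symm
  have hii : i ≠ P.reflectionPerm i i := by
    intro h
    apply root_ne_neg_self (P := P) i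
    nth_rw 1 [h]
    rw [RootPairing.root_reflectionPerm, RootPairing.reflection_apply_self]
  have key : ∀ m : ι, g m + g (P.reflectionPerm i m) =
      (if m = i then 2 else 0) + (if m = P.reflectionPerm i i then 2 else 0) := by
    intro m
    rcases eq_or_ne m i with rfl | hC
    · rw [hg]
      beta_reduce
      have hA : (0:ℝ) < f (P.root m) := hi.1
      have hB : ¬ (0 < f (P.root (P.reflectionPerm m m))) := by
        rw [RootPairing.root_reflectionPerm, RootPairing.reflection_apply_self, map_neg]
        linarith
      rw [if_pos hA, if_neg hB, if_pos rfl, if_neg hii, RootPairing.pairing_same]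
    · rcases eq_or_ne m (P.reflectionPerm i i) with rfl | hD
      · rw [hg]
        beta_reduce
        have hA : ¬ (0 < f (P.root (P.reflectionPerm i i))) := by
          rw [RootPairing.root_reflectionPerm, RootPairing.reflection_apply_self, map_neg]
          linarith [show (0:ℝ) < f (P.root i) from hi.1]
        have hB : (0:ℝ) < f (P.root i) := hi.1
        rw [RootPairing.reflectionPerm_self]
        rw [if_neg hA, if_pos hB, if_neg (Ne.symm hii),
          if_pos (rfl : P.reflectionPerm i i = P.reflectionPerm i i),
          RootPairing.pairing_same]
      · have hroot_ne : P.root m ≠ P.root i := fun h => hC (P.root.injective h)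
        have hroot_ne' : P.root m ≠ - P.root i := by
          intro h
          apply hD
          apply P.root.injective
          rw [h, RootPairing.root_reflectionPerm, RootPairing.reflection_apply_self]
        rw [hg]
        beta_reduce
        rw [if_neg hC, if_neg hD]
        rcases lt_or_gt_of_ne (hreg m) with hneg | hpos
        · have hneg2 := simple_refl_neg hP hreg hSL hi hneg hroot_ne'
          rw [if_neg (not_lt.mpr hneg.le), if_neg (not_lt.mpr hneg2.le)]
        · have hpos2 := simple_refl_pos hP hreg hSL hi hpos hroot_ne
          rw [if_pos hpos, if_pos (show 0 < f (P.root (P.reflectionPerm i m)) from hpos2),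
            pairing_perm_left]
          ring
  have hsum : tworho P f i + tworho P f i = 4 := by
    rw [hT]
    nth_rw 2 [hperm]
    rw [← Finset.sum_add_distrib]
    rw [Finset.sum_congr rfl (fun m _ => key m)]
    rw [Finset.sum_add_distrib, Finset.sum_ite_eq' Finset.univ i (fun _ => (2:ℝ)),
      Finset.sum_ite_eq' Finset.univ (P.reflectionPerm i i) (fun _ => (2:ℝ))]
    simp only [Finset.mem_univ, if_pos]
    norm_num
  linarith

lemma tworho_sum_eq (hP : P.IsCrystallographic) (hreg : Regular P f)
    (hSL : ∀ i j : ι, P.pairing i j = P.pairing j i) {i j : ι} (hi : IsSimple P f i)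
    (hj : IsSimple P f j) (hpair : P.pairing i j = -1) :
    tworho P f (P.reflectionPerm i j) = 4 := by
  have hco : ∀ m : ι, P.pairing m (P.reflectionPerm i j) = P.pairing m j + P.pairing m i := by
    intro m
    show P.root' m (P.coroot (P.reflectionPerm i j)) = _
    rw [RootPairing.coroot_reflectionPerm, RootPairing.coreflection_apply_coroot, hpair]
    rw [map_sub, map_smul]
    show P.pairing m j - (-1 : ℝ) • P.pairing m i = _
    simp
  unfold tworho
  have : ∀ m : ι, (if 0 < f (P.root m) then P.pairing m (P.reflectionPerm i j) else 0)
      = (if 0 < f (P.root m) then P.pairing m j else 0)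
        + (if 0 < f (P.root m) then P.pairing m i else 0) := by
    intro m
    by_cases h : 0 < f (P.root m)
    · rw [if_pos h, if_pos h, if_pos h, hco]
    · rw [if_neg h, if_neg h, if_neg h]; norm_num
  rw [Finset.sum_congr rfl (fun m _ => this m), Finset.sum_add_distrib]
  have h1 : tworho P f j = 2 := tworho_simple hP hreg hSL hj
  have h2 : tworho P f i = 2 := tworho_simple hP hreg hSL hi
  unfold tworho at h1 h2
  rw [h1, h2]
  norm_num


lemma root_eq_neg_of_pairing_eq_neg_two (hSL : ∀ i j : ι, P.pairing i j = P.pairing j i)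
    {i j : ι} (h : P.pairing i j = -2) : P.root i = - P.root j := by
  have hnorm : B (P.root i) (P.root i) = B (P.root j) (P.root j) :=
    norm_eq_of_pairing_ne_zero hSL (by rw [h]; norm_num)
  have h1 := two_mul_B (P := P) i j
  have hz : B (P.root i + P.root j) (P.root i + P.root j) = 0 := by
    have hs : B (P.root i) (P.root j) = B (P.root j) (P.root i) := B_symm _ _
    simp only [map_add, LinearMap.add_apply]
    rw [h] at h1
    linarith [h1, hnorm, hs]
  have hmem : P.root i + P.root j ∈ P.rootSpan ℝ :=
    add_mem (root_mem_rootSpan i) (root_mem_rootSpan j)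
  have := P.eq_zero_of_mem_rootSpan_of_rootForm_self_eq_zero hmem hz
  rw [add_eq_zero_iff_eq_neg] at this
  exact this

lemma root_eq_or_neg_of_refl_eq (hP : P.IsCrystallographic)
    (hSL : ∀ i j : ι, P.pairing i j = P.pairing j i)
    {a b : ι} (h : refl P a = refl P b) : P.root a = P.root b ∨ P.root a = - P.root b := by
  have happ : refl P a (P.root b) = - P.root b := by
    rw [h]
    show P.reflection b (P.root b) = _
    rw [RootPairing.reflection_apply_self]
  have hthis : P.root b - P.pairing b a • P.root a = - P.root b := by
    rw [← RootPairing.reflection_apply_root]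
    exact happ
  have hBb := B_pos (P := P) b
  have hAB : P.pairing b a * B (P.root a) (P.root b) = 2 * B (P.root b) (P.root b) := by
    have hc := congrArg (fun x => B x (P.root b)) hthis
    simp only [map_sub, map_smul, map_neg, LinearMap.sub_apply, LinearMap.smul_apply,
      LinearMap.neg_apply, smul_eq_mul] at hc
    linarith
  have h2ab' : 2 * B (P.root a) (P.root b) = P.pairing b a * B (P.root b) (P.root b) := by
    rw [two_mul_B, hSL a b]
  have hsq : P.pairing b a ^ 2 = 4 := by
    have e1 : P.pairing b a * (2 * B (P.root a) (P.root b))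
        = P.pairing b a * (P.pairing b a * B (P.root b) (P.root b)) := by rw [h2ab']
    have e2 : 2 * (P.pairing b a * B (P.root a) (P.root b))
        = 2 * (2 * B (P.root b) (P.root b)) := by rw [hAB]
    nlinarith [e1, e2, hBb]
  have hfac : (P.pairing b a - 2) * (P.pairing b a + 2) = 0 := by nlinarith [hsq]
  rcases mul_eq_zero.mp hfac with h' | h'
  · left
    exact (root_eq_of_pairing_eq_two hSL (by linarith : P.pairing b a = 2)).symm
  · right
    have := root_eq_neg_of_pairing_eq_neg_two hSL (by linarith : P.pairing b a = -2)
    rw [this]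
    simp

lemma refl_mul_self (k : ι) : refl P k * refl P k = 1 := by
  ext x
  exact RootPairing.reflection_same P k x

lemma refl_ne_one (k : ι) : refl P k ≠ 1 := by
  intro h
  have : refl P k (P.root k) = P.root k := by rw [h]; rfl
  rw [show refl P k (P.root k) = - P.root k from RootPairing.reflection_apply_self P k]
    at this
  exact root_ne_neg_self (P := P) k this.symm

lemma wrd_inW {w : V ≃ₗ[ℝ] V} {l : List ι} (h : Wrd P f w l) : InW P f w := ⟨l, h⟩

lemma len_le_of_wrd {w : V ≃ₗ[ℝ] V} {l : List ι} (h : Wrd P f w l) : len P f w ≤ l.length :=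
  Nat.sInf_le ⟨l, h, rfl⟩

lemma exists_reduced {w : V ≃ₗ[ℝ] V} (h : InW P f w) :
    ∃ l, Wrd P f w l ∧ l.length = len P f w := by
  obtain ⟨l, hl⟩ := h
  exact Nat.sInf_mem (⟨l.length, l, hl, rfl⟩ :
    {n | ∃ l, Wrd P f w l ∧ l.length = n}.Nonempty)

lemma wrd_append {w₁ w₂ : V ≃ₗ[ℝ] V} {l₁ l₂ : List ι} (h₁ : Wrd P f w₁ l₁)
    (h₂ : Wrd P f w₂ l₂) : Wrd P f (w₁ * w₂) (l₁ ++ l₂) := by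
  refine ⟨fun a ha => ?_, ?_⟩
  · rcases List.mem_append.mp ha with h | h
    · exact h₁.1 a h
    · exact h₂.1 a h
  · rw [List.map_append, List.prod_append, h₁.2, h₂.2]

lemma wrd_one : Wrd P f (1 : V ≃ₗ[ℝ] V) [] := ⟨by simp, by simp⟩

lemma inW_one : InW P f (1 : V ≃ₗ[ℝ] V) := ⟨[], wrd_one⟩

lemma inW_mul {w₁ w₂ : V ≃ₗ[ℝ] V} (h₁ : InW P f w₁) (h₂ : InW P f w₂) : InW P f (w₁ * w₂) := by
  obtain ⟨l₁, hl₁⟩ := h₁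
  obtain ⟨l₂, hl₂⟩ := h₂
  exact ⟨l₁ ++ l₂, wrd_append hl₁ hl₂⟩

lemma len_one : len P f (1 : V ≃ₗ[ℝ] V) = 0 :=
  Nat.le_zero.mp (len_le_of_wrd wrd_one)

lemma len_mul_le {w₁ w₂ : V ≃ₗ[ℝ] V} (h₁ : InW P f w₁) (h₂ : InW P f w₂) :
    len P f (w₁ * w₂) ≤ len P f w₁ + len P f w₂ := by
  obtain ⟨l₁, hl₁, he₁⟩ := exists_reduced h₁
  obtain ⟨l₂, hl₂, he₂⟩ := exists_reduced h₂
  have := len_le_of_wrd (wrd_append hl₁ hl₂)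
  rwa [List.length_append, he₁, he₂] at this

lemma wrd_reverse {w : V ≃ₗ[ℝ] V} {l : List ι} (h : Wrd P f w l) : Wrd P f w⁻¹ l.reverse := by
  refine ⟨fun a ha => h.1 a (List.mem_reverse.mp ha), ?_⟩
  have key : ∀ l' : List ι, ((l'.reverse.map (refl P)).prod) * ((l'.map (refl P)).prod) = 1 := by
    intro l'
    induction l' with
    | nil => simp
    | cons a t ih =>
        simp only [List.reverse_cons, List.map_append, List.map_cons, List.prod_append,
          List.map_nil, List.prod_cons, List.prod_nil, mul_one]
        calc (t.reverse.map (refl P)).prod * refl P a * (refl P a * (t.map (refl P)).prod)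
            = (t.reverse.map (refl P)).prod * (refl P a * refl P a) * (t.map (refl P)).prod := by
              group
          _ = 1 := by rw [refl_mul_self]; rw [mul_one]; exact ih
  have := key l
  rw [h.2] at this
  exact eq_inv_of_mul_eq_one_left this

lemma inW_inv {w : V ≃ₗ[ℝ] V} (h : InW P f w) : InW P f w⁻¹ := by
  obtain ⟨l, hl⟩ := h
  exact ⟨l.reverse, wrd_reverse hl⟩

lemma len_inv {w : V ≃ₗ[ℝ] V} (h : InW P f w) : len P f w⁻¹ = len P f w := by
  apply le_antisymm
  · obtain ⟨l, hl, he⟩ := exists_reduced h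
    have := len_le_of_wrd (wrd_reverse hl)
    rwa [List.length_reverse, he] at this
  · obtain ⟨l, hl, he⟩ := exists_reduced (inW_inv h)
    have := len_le_of_wrd (wrd_reverse hl)
    rw [List.length_reverse, he, inv_inv] at this
    exact this

lemma wrd_refl_simple {i : ι} (hi : IsSimple P f i) : Wrd P f (refl P i) [i] :=
  ⟨by simpa using hi, by simp⟩

lemma len_refl_simple {i : ι} (hi : IsSimple P f i) : len P f (refl P i) = 1 := by
  apply le_antisymm
  · simpa using len_le_of_wrd (wrd_refl_simple hi)
  · by_contra hc
    push_neg at hc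
    interval_cases h : len P f (refl P i)
    obtain ⟨l, hl, he⟩ := exists_reduced (wrd_inW (wrd_refl_simple hi))
    rw [h] at he
    rw [List.length_eq_zero_iff.mp he] at hl
    exact refl_ne_one (P := P) i (by rw [← hl.2]; simp)


lemma exchange (hP : P.IsCrystallographic) (hreg : Regular P f)
    (hSL : ∀ i j : ι, P.pairing i j = P.pairing j i) :
    ∀ l : List ι, (∀ a ∈ l, IsSimple P f a) → ∀ i : ι, Pos P f i →
      f ((l.map (refl P)).prod (P.root i)) < 0 →
      ∃ l' : List ι, (∀ a ∈ l', IsSimple P f a) ∧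
        (l'.map (refl P)).prod = (l.map (refl P)).prod * refl P i ∧
        l'.length + 1 = l.length := by
  intro l
  induction l with
  | nil =>
      intro _ i hi hneg
      simp only [List.map_nil, List.prod_nil] at hneg
      exact absurd hneg (by simpa using not_lt.mpr (le_of_lt hi))
  | cons a t ih =>
      intro hsimp i hi hneg
      have ha : IsSimple P f a := hsimp a (List.mem_cons_self)
      have ht : ∀ x ∈ t, IsSimple P f x := fun x hx => hsimp x (List.mem_cons_of_mem a hx)
      set m := t.foldr (fun a j => P.reflectionPerm a j) i with hm
      have hprod_root : (t.map (refl P)).prod (P.root i) = P.root m := (root_foldr t i).symm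
      rcases lt_or_gt_of_ne (hreg m) with hneg' | hpos'
      · rw [← hprod_root] at hneg'
        obtain ⟨t', ht', hprod', hlen'⟩ := ih ht i hi hneg'
        refine ⟨a :: t', fun x hx => ?_, ?_, by simpa using hlen'⟩
        · rcases List.mem_cons.mp hx with rfl | hx'
          · exact ha
          · exact ht' x hx'
        · simp only [List.map_cons, List.prod_cons, hprod', mul_assoc]
      · -- the sign flips at a, so root m = root a
        have hPm : Pos P f m := hpos'
        have hflip : f (P.reflection a (P.root m)) < 0 := by
          have : ((a :: t).map (refl P)).prod (P.root i)
              = P.reflection a ((t.map (refl P)).prod (P.root i)) := by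
            simp only [List.map_cons, List.prod_cons, mulApply]; rfl
          rw [this, hprod_root] at hneg
          exact hneg
        have hma : P.root m = P.root a := by
          by_contra hne
          have := simple_refl_pos hP hreg hSL ha hPm hne
          unfold Pos at this
          rw [RootPairing.root_reflectionPerm] at this
          linarith
        have hmaidx : m = a := P.root.injective hma
        have hconj := refl_foldr (P := P) t i
        rw [← hm, hmaidx] at hconj
        refine ⟨t, ht, ?_, by simp⟩
        have : refl P a * (t.map (refl P)).prod =
            ((t.map (refl P)).prod * refl P i * ((t.map (refl P)).prod)⁻¹)
              * (t.map (refl P)).prod := by rw [← hconj]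
        calc (t.map (refl P)).prod
            = refl P a * (refl P a * (t.map (refl P)).prod) := by
              rw [← mul_assoc, refl_mul_self, one_mul]
          _ = refl P a * ((t.map (refl P)).prod * refl P i) := by
              rw [this]; group
          _ = ((a :: t).map (refl P)).prod * refl P i := by
              simp only [List.map_cons, List.prod_cons, mul_assoc]
      
lemma len_mul_refl_of_neg (hP : P.IsCrystallographic) (hreg : Regular P f)
    (hSL : ∀ i j : ι, P.pairing i j = P.pairing j i)
    {w : V ≃ₗ[ℝ] V} {i : ι} (hw : InW P f w) (hi : IsSimple P f i)
    (hneg : f (w (P.root i)) < 0) :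
    len P f (w * refl P i) + 1 = len P f w := by
  obtain ⟨l, hl, hlen⟩ := exists_reduced hw
  obtain ⟨l', hl', hprod', hlen'⟩ := exchange hP hreg hSL l hl.1 i hi.1
    (by rw [hl.2]; exact hneg)
  have hle : len P f (w * refl P i) ≤ l'.length := by
    apply len_le_of_wrd
    exact ⟨hl', by rw [hprod', hl.2]⟩
  have hge : len P f w ≤ len P f (w * refl P i) + 1 := by
    have h1 : InW P f (w * refl P i) := ⟨l', hl', by rw [hprod', hl.2]⟩
    have := len_mul_le h1 (wrd_inW (wrd_refl_simple hi))
    rw [mul_assoc, refl_mul_self, mul_one, len_refl_simple hi] at this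
    exact this
  omega

lemma len_mul_refl_of_pos (hP : P.IsCrystallographic) (hreg : Regular P f)
    (hSL : ∀ i j : ι, P.pairing i j = P.pairing j i)
    {w : V ≃ₗ[ℝ] V} {i : ι} (hw : InW P f w) (hi : IsSimple P f i)
    (hpos : 0 < f (w (P.root i))) :
    len P f (w * refl P i) = len P f w + 1 := by
  have hw' : InW P f (w * refl P i) := inW_mul hw ⟨[i], wrd_refl_simple hi⟩
  have hneg : f ((w * refl P i) (P.root i)) < 0 := by
    rw [mulApply]
    rw [show refl P i (P.root i) = - P.root i from RootPairing.reflection_apply_self _ i]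
    rw [map_neg, map_neg]
    linarith
  have := len_mul_refl_of_neg hP hreg hSL hw' hi hneg
  rw [mul_assoc, refl_mul_self, mul_one] at this
  omega

lemma word_sign_index {w : V ≃ₗ[ℝ] V} {l : List ι} (hl : Wrd P f w l) (i : ι) :
    w (P.root i) = P.root (l.foldr (fun a j => P.reflectionPerm a j) i) := by
  rw [root_foldr, hl.2]

lemma len_parity (hP : P.IsCrystallographic) (hreg : Regular P f)
    (hSL : ∀ i j : ι, P.pairing i j = P.pairing j i)
    {l : List ι} :
    ∀ {w : V ≃ₗ[ℝ] V}, Wrd P f w l → (Even l.length ↔ Even (len P f w)) := by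
  induction l using List.reverseRecOn with
  | nil =>
      intro w hw
      have : w = 1 := by rw [← hw.2]; simp
      rw [this, len_one]
      simp
  | append_singleton t a ih =>
      intro w hw
      have ht : ∀ x ∈ t, IsSimple P f x := fun x hx => hw.1 x (by simp [hx])
      have ha : IsSimple P f a := hw.1 a (by simp)
      set w' := (t.map (refl P)).prod with hw'
      have hwrd' : Wrd P f w' t := ⟨ht, rfl⟩
      have hwdef : w = w' * refl P a := by
        rw [← hw.2]
        simp only [List.map_append, List.prod_append, List.map_cons, List.prod_cons,
          List.map_nil, List.prod_nil, mul_one]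
        rfl
      have hsign := word_sign_index hwrd' a
      have hIH := ih hwrd'
      rcases lt_or_gt_of_ne (hreg (t.foldr (fun a j => P.reflectionPerm a j) a)) with hs | hs
      · have := len_mul_refl_of_neg hP hreg hSL (wrd_inW hwrd') ha (by rw [hsign]; exact hs)
        rw [← hwdef] at this
        rw [List.length_append]
        simp only [List.length_cons, List.length_nil]
        simp only [Nat.even_iff] at hIH ⊢
        omega
      · have := len_mul_refl_of_pos hP hreg hSL (wrd_inW hwrd') ha (by rw [hsign]; exact hs)
        rw [← hwdef] at this
        rw [List.length_append]
        simp only [List.length_cons, List.length_nil]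
        simp only [Nat.even_iff] at hIH ⊢
        omega


variable (hP : P.IsCrystallographic) (hreg : Regular P f)
  (hSL : ∀ i j : ι, P.pairing i j = P.pairing j i)
  {i j : ι} (hi : IsSimple P f i) (hj : IsSimple P f j) (hpair : P.pairing i j = -1)

include hSL hpair in
lemma h2_root : P.root (P.reflectionPerm i j) = P.root i + P.root j := by
  rw [root_perm_eq, ← hSL i j, hpair]
  module

include hSL hi hj hpair in
lemma h2_pos : Pos P f (P.reflectionPerm i j) := by
  show 0 < _
  rw [h2_root hSL hpair, map_add]
  have h1 : (0:ℝ) < f (P.root i) := hi.1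
  have h2 : (0:ℝ) < f (P.root j) := hj.1
  linarith

include hSL hi hj hpair in
lemma h2_not_simple : ¬ IsSimple P f (P.reflectionPerm i j) := by
  intro hs
  exact hs.2 ⟨i, j, hi.1, hj.1, h2_root hSL hpair⟩

lemma h2_refl : refl P (P.reflectionPerm i j) = refl P i * refl P j * refl P i :=
  refl_conj i j

include hi hj in
lemma h2_wrd : Wrd P f (refl P (P.reflectionPerm i j)) [i, j, i] := by
  refine ⟨?_, ?_⟩
  · intro a ha
    rcases ha with _ | ⟨_, h⟩
    · exact hi
    · rcases h with _ | ⟨_, h⟩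
      · exact hj
      · rcases h with _ | ⟨_, h⟩
        · exact hi
        · cases h
  · rw [h2_refl]
    simp [mul_assoc]

include hP hreg hSL hi hj hpair in
lemma h2_len : len P f (refl P (P.reflectionPerm i j)) = 3 := by
  have hw := h2_wrd (P := P) (f := f) hi hj
  have hle : len P f (refl P (P.reflectionPerm i j)) ≤ 3 := by
    simpa using len_le_of_wrd hw
  have hodd : ¬ Even (len P f (refl P (P.reflectionPerm i j))) := by
    have := len_parity hP hreg hSL hw
    simp only [List.length_cons, List.length_nil] at this
    rw [← this]
    decide
  have hne1 : len P f (refl P (P.reflectionPerm i j)) ≠ 1 := by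
    intro h1
    obtain ⟨l, hl, hlen⟩ := exists_reduced (wrd_inW hw)
    rw [h1] at hlen
    obtain ⟨b, rfl⟩ := List.length_eq_one_iff.mp hlen
    have hb : IsSimple P f b := hl.1 b (List.mem_cons_self)
    have hrefl : refl P b = refl P (P.reflectionPerm i j) := by
      have := hl.2
      simpa using this
    rcases root_eq_or_neg_of_refl_eq hP hSL hrefl with he | he
    · have hbij : b = P.reflectionPerm i j := P.root.injective he
      exact h2_not_simple hSL hi hj hpair (hbij ▸ hb)
    · have h1' : (0:ℝ) < f (P.root b) := hb.1
      have h2' : (0:ℝ) < f (P.root (P.reflectionPerm i j)) := h2_pos hSL hi hj hpair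
      rw [he, map_neg] at h1'
      linarith
  have h0 : len P f (refl P (P.reflectionPerm i j)) ≠ 0 := by
    intro h0
    rw [h0] at hodd
    exact hodd (Even.zero)
  have h2 : len P f (refl P (P.reflectionPerm i j)) ≠ 2 := by
    intro h2
    rw [h2] at hodd
    exact hodd (by decide)
  omega

include hP hreg hSL hi hj hpair in
lemma h2_tworho : (len P f (refl P (P.reflectionPerm i j)) : ℝ)
    = tworho P f (P.reflectionPerm i j) - 1 := by
  rw [h2_len hP hreg hSL hi hj hpair, tworho_sum_eq hP hreg hSL hi hj hpair]
  norm_num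

include hP hSL hi hj hpair in
lemma h2_refl_ne : refl P i ≠ refl P j := by
  intro h
  rcases root_eq_or_neg_of_refl_eq hP hSL h with he | he
  · have : i = j := P.root.injective he
    rw [this, RootPairing.pairing_same] at hpair
    norm_num at hpair
  · have h1 : (0:ℝ) < f (P.root i) := hi.1
    have h2 : (0:ℝ) < f (P.root j) := hj.1
    rw [he, map_neg] at h1
    linarith

variable {hP hreg hSL hi hj hpair}

lemma contains_self {v : V ≃ₗ[ℝ] V} : Contains P f v v :=
  ⟨1, 1, inW_one, inW_one, by group, by rw [len_one]; omega⟩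

lemma contains_trans {w v t : V ≃ₗ[ℝ] V} (h1 : Contains P f w v) (h2 : Contains P f v t)
    (ht : InW P f t) : Contains P f w t := by
  obtain ⟨u, u', hu, hu', hweq, hwlen⟩ := h1
  obtain ⟨a, a', ha, ha', hveq, hvlen⟩ := h2
  have hweq' : w = (u * a) * t * (a' * u') := by rw [hweq, hveq]; group
  have hL1 : len P f (u * a) ≤ len P f u + len P f a := len_mul_le hu ha
  have hL2 : len P f (a' * u') ≤ len P f a' + len P f u' := len_mul_le ha' hu'
  have hL3 : len P f w ≤ len P f (u * a) + len P f t + len P f (a' * u') := by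
    rw [hweq']
    calc len P f ((u * a) * t * (a' * u'))
        ≤ len P f ((u * a) * t) + len P f (a' * u') :=
          len_mul_le (inW_mul (inW_mul hu ha) ht) (inW_mul ha' hu')
      _ ≤ len P f (u * a) + len P f t + len P f (a' * u') := by
          have := len_mul_le (inW_mul hu ha) ht
          omega
  refine ⟨u * a, a' * u', inW_mul hu ha, inW_mul ha' hu', hweq', ?_⟩
  omega


lemma claim_descent (hP : P.IsCrystallographic) (hreg : Regular P f)
    (hSL : ∀ i j : ι, P.pairing i j = P.pairing j i) :
    ∀ n : ℕ, ∀ k : ι,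
      (Finset.univ.filter (fun a => 0 < f (P.root a) ∧ f (P.root a) < f (P.root k))).card < n →
      Pos P f k → ¬ IsSimple P f k →
      ∃ i j : ι, IsSimple P f i ∧ IsSimple P f j ∧ P.pairing i j = -1 ∧
        InW P f (refl P k) ∧
        Contains P f (refl P k) (refl P (P.reflectionPerm i j)) := by
  intro n
  induction n with
  | zero => intro k h; omega
  | succ n ih =>
      intro k hcard hk hknot
      obtain ⟨i, hisimp, hip⟩ := exists_simple_pairing_pos hreg k hk
      have hik1 : P.pairing i k = 1 := by
        rcases pairing_mem hP hSL i k with h | h | h | h | h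
        · linarith
        · linarith
        · linarith
        · exact h
        · exfalso
          have hroots := root_eq_of_pairing_eq_two hSL h
          have : i = k := P.root.injective hroots
          exact hknot (this ▸ hisimp)
      have hki1 : P.pairing k i = 1 := by rw [← hSL]; exact hik1
      set k' := P.reflectionPerm i k with hk'
      have hknei : P.root k ≠ P.root i := by
        intro h
        exact hknot ((P.root.injective h) ▸ hisimp)
      have hk'pos : Pos P f k' := simple_refl_pos hP hreg hSL hisimp hk hknei
      have hk'root : P.root k' = P.root k - P.root i := by
        rw [hk', root_perm_eq, hki1, one_smul]
      have hik' : P.pairing i k' = -1 := by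
        rw [hk', RootPairing.pairing_reflectionPerm,
          RootPairing.pairing_reflectionPerm_self_left, hik1]
      have hk'i : P.pairing k' i = -1 := by rw [← hSL]; exact hik'
      have hkperm : P.reflectionPerm i k' = k := by
        rw [hk']
        exact RootPairing.reflectionPerm_self P i k
      have hreflk : refl P k = refl P i * refl P k' * refl P i := by
        have := refl_conj (P := P) i k'
        rw [hkperm] at this
        exact this
      by_cases hk's : IsSimple P f k'
      · refine ⟨i, k', hisimp, hk's, hik', ?_, ?_⟩
        · have hw := h2_wrd (P := P) (f := f) hisimp hk's
          rw [hkperm] at hw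
          exact wrd_inW hw
        · rw [hkperm]
          exact contains_self
      · have hfi : (0:ℝ) < f (P.root i) := hisimp.1
        have hfk' : f (P.root k') < f (P.root k) := by
          rw [hk'root, map_sub]
          linarith
        have hcard' : (Finset.univ.filter
            (fun a => 0 < f (P.root a) ∧ f (P.root a) < f (P.root k'))).card < n := by
          have hlt : (Finset.univ.filter
              (fun a => 0 < f (P.root a) ∧ f (P.root a) < f (P.root k'))).card <
              (Finset.univ.filter
              (fun a => 0 < f (P.root a) ∧ f (P.root a) < f (P.root k))).card := by
            apply Finset.card_lt_card
            constructor
            · intro x hx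
              simp only [Finset.mem_filter, Finset.mem_univ, true_and] at hx ⊢
              exact ⟨hx.1, lt_trans hx.2 hfk'⟩
            · intro hsub
              have hmem : k' ∈ Finset.univ.filter
                  (fun a => 0 < f (P.root a) ∧ f (P.root a) < f (P.root k)) := by
                simp only [Finset.mem_filter, Finset.mem_univ, true_and]
                exact ⟨hk'pos, hfk'⟩
              have := hsub hmem
              simp only [Finset.mem_filter, Finset.mem_univ, true_and] at this
              exact lt_irrefl _ this.2
          omega
        obtain ⟨i₂, j₂, h1, h2, h3, hInW', hcont'⟩ := ih k' hcard' hk'pos hk's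
        have hvi : refl P k' (P.root i) = P.root i + P.root k' := by
          show P.reflection k' (P.root i) = _
          rw [RootPairing.reflection_apply_root, hik']
          module
        have hlen1 : len P f (refl P k' * refl P i) = len P f (refl P k') + 1 := by
          apply len_mul_refl_of_pos hP hreg hSL hInW' hisimp
          rw [hvi, map_add]
          have : (0:ℝ) < f (P.root k') := hk'pos
          linarith
        have hiw : InW P f (refl P i) := ⟨[i], wrd_refl_simple hisimp⟩
        have hinv : (refl P i * refl P k')⁻¹ = refl P k' * refl P i := by
          rw [mul_inv_rev]
          show (refl P k')⁻¹ * (refl P i)⁻¹ = _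
          norm_num [refl]
        have hlen2 : len P f (refl P i * refl P k') = len P f (refl P k') + 1 := by
          have hmulw : InW P f (refl P i * refl P k') := inW_mul hiw hInW'
          have := len_inv hmulw
          rw [hinv] at this
          rw [← this, hlen1]
        have hui : (refl P i * refl P k') (P.root i) = P.root k' := by
          rw [mulApply, hvi, map_add]
          show P.reflection i (P.root i) + P.reflection i (P.root k') = _
          rw [RootPairing.reflection_apply_self, RootPairing.reflection_apply_root, hk'i]
          module
        have hlen3 : len P f (refl P i * refl P k' * refl P i) = len P f (refl P k') + 2 := by
          rw [len_mul_refl_of_pos hP hreg hSL (inW_mul hiw hInW') hisimp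
            (by rw [hui]; exact hk'pos), hlen2]
        have hcont2 : Contains P f (refl P k) (refl P k') := by
          refine ⟨refl P i, refl P i, hiw, hiw, hreflk, ?_⟩
          rw [hreflk, hlen3, len_refl_simple hisimp]
          omega
        refine ⟨i₂, j₂, h1, h2, h3, ?_, contains_trans hcont2 hcont' (wrd_inW (h2_wrd h1 h2))⟩
        rw [hreflk]
        exact inW_mul (inW_mul hiw hInW') hiw

end Dev

/-- in a simply-laced Weyl group, `w` is small-height-avoiding if
and only if it is short-braid-avoiding. -/
theorem smallHeightAvoiding_iff_shortBraidAvoiding (hP : P.IsCrystallographic) (hred : Reduced P) (hreg : Regular P f)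
    (hSL : ∀ i j : ι, P.pairing i j = P.pairing j i)
    (w : V ≃ₗ[ℝ] V) (hw : InW P f w) :
    SmallHeightAvoiding P f w ↔
      ∀ l : List ι, Wrd P f w l → l.length = len P f w →
        ¬ ∃ (l₁ l₂ : List ι) (i j : ι), refl P i ≠ refl P j ∧
          l = l₁ ++ [i, j, i] ++ l₂ := by
  constructor
  · intro hSHA l hwrd hlen
    rintro ⟨l₁, l₂, i, j, hne, rfl⟩
    have hmem : ∀ a ∈ l₁ ++ [i, j, i] ++ l₂, IsSimple P f a := hwrd.1
    have hi : IsSimple P f i := hmem i (by simp)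
    have hj : IsSimple P f j := hmem j (by simp)
    have hl1 : ∀ a ∈ l₁, IsSimple P f a := fun a ha => hmem a (by simp [ha])
    have hl2 : ∀ a ∈ l₂, IsSimple P f a := fun a ha => hmem a (by simp [ha])
    set u := (l₁.map (refl P)).prod with hu
    set u' := (l₂.map (refl P)).prod with hu'
    have hwu : Wrd P f u l₁ := ⟨hl1, rfl⟩
    have hwu' : Wrd P f u' l₂ := ⟨hl2, rfl⟩
    have hweq : w = u * (refl P i * refl P j * refl P i) * u' := by
      rw [← hwrd.2]
      simp only [List.map_append, List.prod_append, List.map_cons, List.map_nil,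
        List.prod_cons, List.prod_nil, mul_one]
      group
      rfl
    have hlentot : l₁.length + 3 + l₂.length = len P f w := by
      rw [← hlen]
      simp [List.length_append]
      omega
    rcases pairing_mem hP hSL i j with hc | hc | hc | hc | hc
    · have hroots := root_eq_neg_of_pairing_eq_neg_two hSL hc
      have h1 : (0:ℝ) < f (P.root i) := hi.1
      have h2 : (0:ℝ) < f (P.root j) := hj.1
      rw [hroots, map_neg] at h1
      linarith
    · apply hSHA
      refine ⟨P.reflectionPerm i j, h2_pos hSL hi hj hc, h2_not_simple hSL hi hj hc,
        h2_tworho hP hreg hSL hi hj hc, ?_⟩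
      have hlen3 : len P f (refl P (P.reflectionPerm i j)) = 3 := h2_len hP hreg hSL hi hj hc
      have hle_u : len P f u ≤ l₁.length := len_le_of_wrd hwu
      have hle_u' : len P f u' ≤ l₂.length := len_le_of_wrd hwu'
      have hweq' : w = u * refl P (P.reflectionPerm i j) * u' := by
        rw [hweq, h2_refl]
      have hsub : len P f w ≤ len P f u + len P f (refl P (P.reflectionPerm i j))
          + len P f u' := by
        rw [hweq']
        calc len P f (u * refl P (P.reflectionPerm i j) * u')
            ≤ len P f (u * refl P (P.reflectionPerm i j)) + len P f u' :=
              len_mul_le (inW_mul (wrd_inW hwu) (wrd_inW (h2_wrd hi hj))) (wrd_inW hwu')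
          _ ≤ len P f u + len P f (refl P (P.reflectionPerm i j)) + len P f u' := by
              have := len_mul_le (wrd_inW hwu) (wrd_inW (h2_wrd hi hj))
              omega
      exact ⟨u, u', wrd_inW hwu, wrd_inW hwu', hweq', by omega⟩
    · have hc' : P.pairing j i = 0 := by rw [← hSL]; exact hc
      have horth : P.IsOrthogonal i j := ⟨hc, hc'⟩
      have hcomm : Commute (P.reflection i) (P.reflection j) :=
        RootPairing.isOrthogonal_comm P i j horth
      have hsjsij : refl P i * refl P j * refl P i = refl P j := by
        have hcm : refl P i * refl P j = refl P j * refl P i := hcomm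
        rw [hcm, mul_assoc, refl_mul_self, mul_one]
      have hwrd2 : Wrd P f w (l₁ ++ [j] ++ l₂) := by
        refine ⟨?_, ?_⟩
        · intro a ha
          simp only [List.mem_append, List.mem_cons, List.not_mem_nil, or_false] at ha
          rcases ha with (ha | rfl) | ha
          · exact hl1 a ha
          · exact hj
          · exact hl2 a ha
        · simp only [List.map_append, List.prod_append, List.map_cons, List.map_nil,
            List.prod_cons, List.prod_nil, mul_one]
          rw [hweq, hsjsij]
      have hshort := len_le_of_wrd hwrd2
      simp only [List.length_append, List.length_cons, List.length_nil] at hshort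
      omega
    · have hji1 : P.pairing j i = 1 := by rw [← hSL]; exact hc
      have hgroot : P.root (P.reflectionPerm i j) = P.root j - P.root i := by
        rw [root_perm_eq, hji1, one_smul]
      rcases lt_or_gt_of_ne (hreg (P.reflectionPerm i j)) with hneg | hpos
      · apply hi.2
        refine ⟨j, P.reflectionPerm (P.reflectionPerm i j) (P.reflectionPerm i j),
          hj.1, ?_, ?_⟩
        · show 0 < _
          rw [RootPairing.root_reflectionPerm, RootPairing.reflection_apply_self, map_neg]
          linarith
        · rw [RootPairing.root_reflectionPerm, RootPairing.reflection_apply_self, hgroot]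
          abel
      · apply hj.2
        refine ⟨P.reflectionPerm i j, i, hpos, hi.1, ?_⟩
        rw [hgroot]
        abel
    · have hroots := root_eq_of_pairing_eq_two hSL hc
      have : i = j := P.root.injective hroots
      exact hne (by rw [this])
  · intro hB
    rintro ⟨k, hkpos, hknot, _, hcont⟩
    obtain ⟨i, j, hi, hj, hpair, hkInW, hcont2⟩ :=
      claim_descent hP hreg hSL _ k (Nat.lt_succ_self _) hkpos hknot
    have hwrd3 : Wrd P f (refl P (P.reflectionPerm i j)) [i, j, i] := h2_wrd hi hj
    have hcontw : Contains P f w (refl P (P.reflectionPerm i j)) :=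
      contains_trans hcont hcont2 (wrd_inW hwrd3)
    obtain ⟨u, u', hu, hu', hweq, hwlen⟩ := hcontw
    obtain ⟨lu, hlu, hlulen⟩ := exists_reduced hu
    obtain ⟨lu', hlu', hlulen'⟩ := exists_reduced hu'
    have hw3 : Wrd P f w (lu ++ [i, j, i] ++ lu') := by
      have h := wrd_append (wrd_append hlu hwrd3) hlu'
      rw [← hweq] at h
      exact h
    have hlen3 := h2_len hP hreg hSL hi hj hpair
    have hw3len : (lu ++ [i, j, i] ++ lu').length = len P f w := by
      simp only [List.length_append, List.length_cons, List.length_nil]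
      omega
    exact hB _ hw3 hw3len ⟨lu, lu', i, j, h2_refl_ne hP hSL hi hj hpair, rfl⟩

end QBG
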